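/- If (T*,λ*) is a least-resolved tree for a tree-like map ε, then (T*,λ*) contains no inner edge with label ⊗. -/

import Mathlib

namespace GenFitch

/-- A rooted tree with leaf set `X`: a finite tree (acyclic connected simple
graph) with a distinguished root and an injective embedding of `X` onto the
set of vertices of degree at most one (the leaves). -/
structure RootedTree (X : Type) where
  V : Type
  fintypeV : Fintype V
  G : SimpleGraph V
  isTree : G.IsTree
  root : V
  leaf : X → V
  leaf_inj : Function.Injective leaf
  leaf_iff : ∀ v : V, (∃ x : X, leaf x = v) ↔ (G.neighborSet v).ncard ≤ 1

namespace RootedTree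

variable {X : Type}

/-- Degree of a vertex. -/
noncomputable def deg (T : RootedTree X) (v : T.V) : ℕ := (T.G.neighborSet v).ncard

/-- `v` is a leaf. -/
def IsLeaf (T : RootedTree X) (v : T.V) : Prop := ∃ x : X, T.leaf x = v

/-- `T` is phylogenetic: the root is an inner vertex of degree at least 2 and
every other inner vertex has degree at least 3. -/
def Phylo (T : RootedTree X) : Prop :=
  ¬ T.IsLeaf T.root ∧ 2 ≤ T.deg T.root ∧
    ∀ v : T.V, ¬ T.IsLeaf v → v ≠ T.root → 3 ≤ T.deg v

/-- `T` is binary: the root has degree exactly 2 and every other inner vertex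
has degree exactly 3. -/
def Binary (T : RootedTree X) : Prop :=
  T.deg T.root = 2 ∧ ∀ v : T.V, ¬ T.IsLeaf v → v ≠ T.root → T.deg v = 3

/-- `u` is an ancestor of `v` (written `u ⪰_T v`): `u` lies on the (unique)
path from the root to `v`. -/
def Anc (T : RootedTree X) (u v : T.V) : Prop :=
  ∀ p : T.G.Walk T.root v, p.IsPath → u ∈ p.support

/-- `l` is the least common ancestor of the set of vertices `S`. -/
def IsLcaSet (T : RootedTree X) (l : T.V) (S : Set T.V) : Prop :=
  (∀ v ∈ S, T.Anc l v) ∧ ∀ u : T.V, (∀ v ∈ S, T.Anc u v) → T.Anc u l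

/-- `T` displays the rooted triple `xy|z`, i.e. `lca(x,y) ≺ lca(x,y,z)`. -/
def Displays (T : RootedTree X) (x y z : X) : Prop :=
  ∃ l₂ l₃ : T.V, T.IsLcaSet l₂ {T.leaf x, T.leaf y} ∧
    T.IsLcaSet l₃ {T.leaf x, T.leaf y, T.leaf z} ∧ T.Anc l₃ l₂ ∧ l₂ ≠ l₃

end RootedTree

/-- Some edge on the (unique) path from `lca(x,y)` to `y` carries the label
`m`.  Labels are drawn from `Option L`, with `none` playing the role of `⊗`. -/
def PathHasLabel {X L : Type} (T : RootedTree X) (lam : Sym2 T.V → Option L)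
    (x y : X) (m : L) : Prop :=
  ∃ l : T.V, T.IsLcaSet l {T.leaf x, T.leaf y} ∧
    ∃ p : T.G.Walk l (T.leaf y), p.IsPath ∧ ∃ e ∈ p.edges, lam e = some m

/-- The edge-labeled tree `(T,lam)` explains the map `eps`:
for all distinct `x y`, `eps x y = some m` iff some edge on the path from
`lca(x,y)` to `y` has label `m`, and `eps x y = none` (i.e. `⊗`) iff no edge
on that path carries a label in `L`. -/
def Explains {X L : Type} (T : RootedTree X) (lam : Sym2 T.V → Option L)
    (eps : X → X → Option L) : Prop :=
  ∀ x y : X, x ≠ y →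
    ((∀ m : L, eps x y = some m ↔ PathHasLabel T lam x y m) ∧
     (eps x y = none ↔ ∀ m : L, ¬ PathHasLabel T lam x y m))

/-- `eps` is tree-like: some edge-labeled phylogenetic tree explains it. -/
def TreeLike {X L : Type} (eps : X → X → Option L) : Prop :=
  ∃ (T : RootedTree X) (lam : Sym2 T.V → Option L), T.Phylo ∧ Explains T lam eps

/-- The set `X_s` for a symbol `s ∈ M ∪ {⊗}` (encoded as `s : Option M`):
those `x` having an in-arc labeled `s` and all other in-arcs labeled `⊗` or `s`. -/
def Xset {X M : Type} (eps : X → X → Option M) (s : Option M) : Set X :=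
  {x : X | ∃ z : X, z ≠ x ∧ eps z x = s ∧
    ∀ z' : X, z' ≠ z → z' ≠ x → (eps z' x = none ∨ eps z' x = s)}

/-- The sets `X_s`, `s ∈ M ∪ {⊗}`, form a quasi-partition of `X`: pairwise
disjoint, union `X`, and at most one of them empty. -/
def QuasiPartition {X M : Type} (eps : X → X → Option M) : Prop :=
  (∀ s t : Option M, s ≠ t → Disjoint (Xset eps s) (Xset eps t)) ∧
  (⋃ s : Option M, Xset eps s) = Set.univ ∧
  {s : Option M | Xset eps s = ∅}.Subsingleton

/-- A digraph `(Y, A)` is a simple Fitch graph: it is explained by a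
`{1,⊗}`-edge-labeled phylogenetic tree on `Y` (a digraph on at most one
vertex is trivially explained by the trivial tree). -/
def IsFitchGraph (Y : Type) (A : Y → Y → Prop) : Prop :=
  Subsingleton Y ∨
  ∃ (T : RootedTree Y) (lam : Sym2 T.V → Option Unit), T.Phylo ∧
    ∀ x y : Y, x ≠ y → (A x y ↔ PathHasLabel T lam x y Unit.unit)

/-- `T'` is obtained from `T` by contracting (the fibers of) `φ`; equivalently,
`T` refines `T'`. -/
structure IsContractionMap {X : Type} (T T' : RootedTree X) (φ : T.V → T'.V) :
    Prop where
  surj : Function.Surjective φ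
  root_map : φ T.root = T'.root
  leaf_map : ∀ x : X, φ (T.leaf x) = T'.leaf x
  adj_map : ∀ a b : T.V, T.G.Adj a b → φ a = φ b ∨ T'.G.Adj (φ a) (φ b)
  adj_lift : ∀ u v : T'.V, T'.G.Adj u v →
    ∃ a b : T.V, T.G.Adj a b ∧ φ a = u ∧ φ b = v
  fiber_conn : ∀ u : T'.V, (T.G.induce {a : T.V | φ a = u}).Connected

/-- `(T,lam)` is a least-resolved tree explaining `eps`: it explains `eps` and
no tree obtained from `T` by contracting one or more edges admits an
edge-labeling explaining `eps`. -/
def LeastResolved {X M : Type} (eps : X → X → Option M) (T : RootedTree X)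
    (lam : Sym2 T.V → Option M) : Prop :=
  T.Phylo ∧ Explains T lam eps ∧
    ∀ (T' : RootedTree X) (φ : T.V → T'.V) (lam' : Sym2 T'.V → Option M),
      IsContractionMap T T' φ → ¬ Function.Injective φ → T'.Phylo →
        ¬ Explains T' lam' eps

/-- The rooted triple `xy|z` is informative for `eps`. -/
def Informative {X M : Type} (eps : X → X → Option M) (x y z : X) : Prop :=
  x ≠ y ∧ x ≠ z ∧ y ≠ z ∧
  ∃ m : M, eps z x = some m ∧ eps z y = some m ∧ eps x z = eps y z ∧
    (eps x y = none ∨ eps x y = some m) ∧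
    (eps y x = none ∨ eps y x = some m) ∧
    (eps x y = none ∨ eps y x = none)

/-- `T'` (a rooted tree on `Y`, with `incl : Y → X` and vertex embedding `ι`)
is the restriction `T|Y` of `T` to the leaf set `Y`: leaves map to leaves,
the ancestor relation is preserved and reflected, the vertices of `T'`
correspond exactly to the least common ancestors of pairs of `Y`-leaves in
`T`, and the root of `T'` corresponds to the least common ancestor of all
`Y`-leaves. -/
structure IsRestriction {X Y : Type} (T : RootedTree X) (incl : Y → X)
    (T' : RootedTree Y) (ι : T'.V → T.V) : Prop where
  inj : Function.Injective ι
  leaf_map : ∀ y : Y, ι (T'.leaf y) = T.leaf (incl y)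
  anc_iff : ∀ a b : T'.V, T'.Anc a b ↔ T.Anc (ι a) (ι b)
  image : ∀ v : T.V, (∃ a : T'.V, ι a = v) ↔
      ∃ y z : Y, T.IsLcaSet v {T.leaf (incl y), T.leaf (incl z)}
  root_map : T.IsLcaSet (ι T'.root) {v : T.V | ∃ y : Y, v = T.leaf (incl y)}

/-! ### Tree toolkit -/

open SimpleGraph

attribute [local instance] Classical.propDecidable

section TreeToolkit

variable {V : Type} {G : SimpleGraph V}

noncomputable def tpath (hG : G.IsTree) (u v : V) : G.Walk u v :=
  ((hG.existsUnique_path u v).exists).choose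

lemma tpath_isPath (hG : G.IsTree) (u v : V) : (tpath hG u v).IsPath :=
  ((hG.existsUnique_path u v).exists).choose_spec

lemma path_eq (hG : G.IsTree) {u v : V} {p q : G.Walk u v}
    (hp : p.IsPath) (hq : q.IsPath) : p = q := by
  obtain ⟨r, -, hr⟩ := hG.existsUnique_path u v
  rw [hr p hp, hr q hq]

lemma append_isPath {u m w : V} {p : G.Walk u m} {q : G.Walk m w}
    (hp : p.IsPath) (hq : q.IsPath)
    (hint : ∀ z, z ∈ p.support → z ∈ q.support → z = m) :
    (p.append q).IsPath := by
  rw [Walk.isPath_def, Walk.support_append]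
  refine List.Nodup.append hp.support_nodup ?_ ?_
  · have h := hq.support_nodup
    rw [q.support_eq_cons] at h
    exact h.of_cons
  · intro z hzp hzt
    have hzq : z ∈ q.support := by
      rw [q.support_eq_cons]; exact List.mem_cons_of_mem _ hzt
    have hzm := hint z hzp hzq
    subst hzm
    have h := hq.support_nodup
    rw [q.support_eq_cons] at h
    exact (List.nodup_cons.mp h).1 hzt

lemma mem_take_drop {u w v : V} {p : G.Walk u w} (hp : p.IsPath)
    (hm : v ∈ p.support) {z : V}
    (hzt : z ∈ (p.takeUntil v hm).support)
    (hzd : z ∈ (p.dropUntil v hm).support) : z = v := by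
  by_contra hne
  have h2 := hp.support_nodup
  rw [← Walk.take_spec p hm, Walk.support_append, List.nodup_append] at h2
  refine h2.2.2 z hzt z ?_ rfl
  rw [(p.dropUntil v hm).support_eq_cons] at hzd
  rcases List.mem_cons.mp hzd with h | h
  · exact absurd h hne
  · exact h

lemma edge_mem_of_mem_support (hG : G.IsTree) {u v a b : V} {p : G.Walk u v}
    (hp : p.IsPath) (hadj : G.Adj a b)
    (hau : a ∈ p.support) (hbu : b ∈ p.support) : s(a, b) ∈ p.edges := by
  have hsplit : a ∈ (p.takeUntil b hbu).support ∨ a ∈ (p.dropUntil b hbu).support := by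
    rw [← Walk.mem_support_append_iff, Walk.take_spec]
    exact hau
  rcases hsplit with h | h
  · have hd : ((p.takeUntil b hbu).dropUntil a h).IsPath := (hp.takeUntil hbu).dropUntil h
    have hcons : (Walk.cons hadj Walk.nil : G.Walk a b).IsPath := by
      rw [Walk.cons_isPath_iff]
      exact ⟨Walk.IsPath.nil, by simp [hadj.ne]⟩
    have heq := path_eq hG hd hcons
    have hmem : s(a, b) ∈ ((p.takeUntil b hbu).dropUntil a h).edges := by
      rw [heq]; simp
    exact Walk.edges_takeUntil_subset _ _ (Walk.edges_dropUntil_subset _ _ hmem)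
  · have hd : ((p.dropUntil b hbu).takeUntil a h).IsPath := (hp.dropUntil hbu).takeUntil h
    have hcons : (Walk.cons hadj.symm Walk.nil : G.Walk b a).IsPath := by
      rw [Walk.cons_isPath_iff]
      exact ⟨Walk.IsPath.nil, by simp [hadj.ne']⟩
    have heq := path_eq hG hd hcons
    have hmem : s(b, a) ∈ ((p.dropUntil b hbu).takeUntil a h).edges := by
      rw [heq]; simp
    rw [Sym2.eq_swap] at hmem
    exact Walk.edges_dropUntil_subset _ _ (Walk.edges_takeUntil_subset _ _ hmem)

lemma meet (hG : G.IsTree) :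
    ∀ {u s : V} (p : G.Walk u s), p.IsPath → ∀ {t : V} (q : G.Walk u t), q.IsPath →
    ∃ (l : V) (hl : l ∈ p.support), l ∈ q.support ∧
      ∀ z, z ∈ p.support → z ∈ q.support → z ∈ (p.takeUntil l hl).support := by
  intro u s p
  induction p with
  | nil =>
    intro hnil t q hq
    rename_i u₀
    refine ⟨u₀, by simp, q.start_mem_support, ?_⟩
    intro z hz _
    simp only [Walk.support_nil, List.mem_singleton] at hz
    subst hz
    exact Walk.start_mem_support _
  | @cons u u₁ s huu₁ p' ih =>
    intro hp t q hq
    cases q with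
    | nil =>
      refine ⟨u, Walk.start_mem_support _, Walk.start_mem_support _, ?_⟩
      intro z _ hzq
      simp only [Walk.support_nil, List.mem_singleton] at hzq
      subst hzq
      exact Walk.start_mem_support _
    | @cons _ u₂ _ h₂ q' =>
      by_cases he : u₁ = u₂
      · subst he
        obtain ⟨l, hl, hlq, H⟩ := ih hp.of_cons q' hq.of_cons
        have hl' : l ∈ (Walk.cons huu₁ p').support := by
          rw [Walk.support_cons]; exact List.mem_cons_of_mem _ hl
        have hlu : l ≠ u := by
          intro hlu
          exact (Walk.cons_isPath_iff huu₁ p').mp hp |>.2 (hlu ▸ hl)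
        have hkey : (Walk.cons huu₁ p').takeUntil l hl' =
            Walk.cons huu₁ (p'.takeUntil l hl) := by
          refine path_eq hG (hp.takeUntil hl') ?_
          rw [Walk.cons_isPath_iff]
          refine ⟨hp.of_cons.takeUntil hl, ?_⟩
          intro hmem
          exact ((Walk.cons_isPath_iff huu₁ p').mp hp).2
            (Walk.support_takeUntil_subset _ _ hmem)
        refine ⟨l, hl', by rw [Walk.support_cons]; exact List.mem_cons_of_mem _ hlq, ?_⟩
        intro z hzp hzq
        rw [hkey, Walk.support_cons]
        rw [Walk.support_cons, List.mem_cons] at hzp hzq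
        rcases hzp with rfl | hzp
        · exact List.mem_cons_self
        rcases hzq with rfl | hzq
        · exact List.mem_cons_self
        exact List.mem_cons_of_mem _ (H z hzp hzq)
      · refine ⟨u, Walk.start_mem_support _, Walk.start_mem_support _, ?_⟩
        intro z hzp hzq
        suffices hz : z = u by
          subst hz; exact Walk.start_mem_support _
        by_contra hzu
        rw [Walk.support_cons, List.mem_cons] at hzp hzq
        rcases hzp with rfl | hzp
        · exact hzu rfl
        rcases hzq with rfl | hzq
        · exact hzu rfl
        have hP1 : (Walk.cons huu₁ (p'.takeUntil z hzp)).IsPath := by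
          rw [Walk.cons_isPath_iff]
          refine ⟨hp.of_cons.takeUntil hzp, ?_⟩
          intro hmem
          exact ((Walk.cons_isPath_iff huu₁ p').mp hp).2
            (Walk.support_takeUntil_subset _ _ hmem)
        have hP2 : (Walk.cons h₂ (q'.takeUntil z hzq)).IsPath := by
          rw [Walk.cons_isPath_iff]
          refine ⟨hq.of_cons.takeUntil hzq, ?_⟩
          intro hmem
          exact ((Walk.cons_isPath_iff h₂ q').mp hq).2
            (Walk.support_takeUntil_subset _ _ hmem)
        have heq := path_eq hG hP1 hP2
        have hsup := congrArg Walk.support heq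
        rw [Walk.support_cons, Walk.support_cons,
          (p'.takeUntil z hzp).support_eq_cons, (q'.takeUntil z hzq).support_eq_cons] at hsup
        simp only [List.cons.injEq] at hsup
        exact he hsup.2.1

end TreeToolkit

section RT
open SimpleGraph RootedTree
variable {X : Type} (T : RootedTree X)

lemma anc_iff_mem {u v : T.V} (p : T.G.Walk T.root v) (hp : p.IsPath) :
    T.Anc u v ↔ u ∈ p.support :=
  ⟨fun h => h p hp, fun h q hq => by rw [path_eq T.isTree hq hp]; exact h⟩

lemma anc_antisymm {u v : T.V} (h1 : T.Anc u v) (h2 : T.Anc v u) : u = v := by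
  have hp : (tpath T.isTree T.root v).IsPath := tpath_isPath _ _ _
  have hu : u ∈ (tpath T.isTree T.root v).support := (anc_iff_mem T _ hp).mp h1
  have hq : ((tpath T.isTree T.root v).takeUntil u hu).IsPath := hp.takeUntil hu
  have hv : v ∈ ((tpath T.isTree T.root v).takeUntil u hu).support := (anc_iff_mem T _ hq).mp h2
  have hv2 : v ∈ ((tpath T.isTree T.root v).dropUntil u hu).support := Walk.end_mem_support _
  exact (mem_take_drop hp hu hv hv2).symm

lemma exists_lca (s t : T.V) : ∃ l : T.V, T.IsLcaSet l {s, t} := by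
  obtain ⟨l, hl, hlq, H⟩ := meet T.isTree (tpath T.isTree T.root s) (tpath_isPath _ _ _)
    (tpath T.isTree T.root t) (tpath_isPath _ _ _)
  refine ⟨l, ?_, ?_⟩
  · intro v hv
    rcases hv with rfl | hv
    · exact (anc_iff_mem T _ (tpath_isPath _ _ _)).mpr hl
    · rcases hv with rfl
      exact (anc_iff_mem T _ (tpath_isPath _ _ _)).mpr hlq
  · intro u hu
    have hus := (anc_iff_mem T (tpath T.isTree T.root s) (tpath_isPath _ _ _)).mp
      (hu s (by simp))
    have hut := (anc_iff_mem T (tpath T.isTree T.root t) (tpath_isPath _ _ _)).mp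
      (hu t (by simp))
    exact (anc_iff_mem T _ ((tpath_isPath _ _ _).takeUntil hl)).mpr (H u hus hut)

lemma two_le_deg {v : T.V} (hv : ¬ T.IsLeaf v) : 2 ≤ T.deg v := by
  by_contra h
  exact hv ((T.leaf_iff v).mpr (by unfold RootedTree.deg at h; omega))

end RT

/-! ### Contraction -/

section Contract
open SimpleGraph RootedTree

variable {X M : Type} (T : RootedTree X) (a b : T.V)

noncomputable def cf (hne : a ≠ b) : T.V → {v : T.V // v ≠ b} :=
  fun v => if h : v = b then ⟨a, hne⟩ else ⟨v, h⟩

variable (hne : a ≠ b)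

lemma cf_of_ne {v : T.V} (h : v ≠ b) : cf T a b hne v = ⟨v, h⟩ := dif_neg h

lemma cf_b : cf T a b hne b = ⟨a, hne⟩ := dif_pos rfl

lemma cf_a : cf T a b hne a = ⟨a, hne⟩ := dif_neg hne

lemma cf_self (u : {v : T.V // v ≠ b}) : cf T a b hne u.val = u := by
  rw [cf_of_ne T a b hne u.prop]

lemma cf_eq_iff {x y : T.V} :
    cf T a b hne x = cf T a b hne y ↔ x = y ∨ (x = a ∧ y = b) ∨ (x = b ∧ y = a) := by
  constructor
  · intro h
    by_cases hx : x = b <;> by_cases hy : y = b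
    · exact Or.inl (hx.trans hy.symm)
    · rw [hx, cf_b, cf_of_ne T a b hne hy] at h
      exact Or.inr (Or.inr ⟨hx, (congrArg Subtype.val h).symm⟩)
    · rw [hy, cf_of_ne T a b hne hx, cf_b] at h
      exact Or.inr (Or.inl ⟨congrArg Subtype.val h, hy⟩)
    · rw [cf_of_ne T a b hne hx, cf_of_ne T a b hne hy] at h
      exact Or.inl (congrArg Subtype.val h)
  · rintro (rfl | ⟨rfl, rfl⟩ | ⟨rfl, rfl⟩)
    · rfl
    · rw [cf_a, cf_b]
    · rw [cf_a, cf_b]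

lemma cf_fiber {v : T.V} {u : {v : T.V // v ≠ b}} (h : cf T a b hne v = u) :
    v = u.val ∨ (u.val = a ∧ v = b) := by
  by_cases hv : v = b
  · rw [hv, cf_b] at h
    exact Or.inr ⟨(congrArg Subtype.val h).symm, hv⟩
  · rw [cf_of_ne T a b hne hv] at h
    exact Or.inl (congrArg Subtype.val h)

def CG : SimpleGraph {v : T.V // v ≠ b} where
  Adj u v := u ≠ v ∧ ∃ x y, T.G.Adj x y ∧ cf T a b hne x = u ∧ cf T a b hne y = v
  symm := by
    constructor
    rintro u v ⟨h1, x, y, hxy, hx, hy⟩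
    exact ⟨h1.symm, y, x, hxy.symm, hy, hx⟩
  loopless := ⟨fun u h => h.1 rfl⟩

lemma no_triangle (hab : T.G.Adj a b) (c : T.V) (h1 : T.G.Adj a c) (h2 : T.G.Adj b c) :
    False := by
  have hp1 : (Walk.cons h1 Walk.nil : T.G.Walk a c).IsPath := by
    rw [Walk.cons_isPath_iff]
    exact ⟨Walk.IsPath.nil, by simp [h1.ne]⟩
  have hp2 : (Walk.cons hab (Walk.cons h2 Walk.nil) : T.G.Walk a c).IsPath := by
    rw [Walk.cons_isPath_iff, Walk.cons_isPath_iff]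
    refine ⟨⟨Walk.IsPath.nil, by simp [h2.ne]⟩, ?_⟩
    simp [hab.ne, h1.ne]
  have hl := congrArg Walk.length (path_eq T.isTree hp1 hp2)
  simp at hl

lemma adj_cf_eq {u w : T.V} (h : T.G.Adj u w) (heq : cf T a b hne u = cf T a b hne w) :
    s(u, w) = s(a, b) := by
  rcases (cf_eq_iff T a b hne).mp heq with rfl | ⟨rfl, rfl⟩ | ⟨rfl, rfl⟩
  · exact absurd rfl h.ne
  · rfl
  · exact Sym2.eq_swap

lemma edge_eq_cf_eq {u w : T.V} (hs : s(u, w) = s(a, b)) :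
    cf T a b hne u = cf T a b hne w := by
  rw [Sym2.eq_iff] at hs
  rcases hs with ⟨rfl, rfl⟩ | ⟨rfl, rfl⟩
  · rw [cf_a, cf_b]
  · rw [cf_a, cf_b]

lemma map_edge_inj_pair (hab : T.G.Adj a b) {x₁ y₁ x₂ y₂ : T.V}
    (h₁ : T.G.Adj x₁ y₁) (h₂ : T.G.Adj x₂ y₂) (hs : s(x₁, y₁) ≠ s(a, b))
    (e1 : cf T a b hne x₁ = cf T a b hne x₂) (e2 : cf T a b hne y₁ = cf T a b hne y₂) :
    s(x₁, y₁) = s(x₂, y₂) := by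
  rcases (cf_eq_iff T a b hne).mp e1 with h1 | ⟨hxa, hxb⟩ | ⟨hxb, hxa⟩
  · rcases (cf_eq_iff T a b hne).mp e2 with h2 | ⟨hya, hyb⟩ | ⟨hyb, hya⟩
    · rw [h1, h2]
    · rw [hya] at h₁
      rw [hyb, ← h1] at h₂
      exact (no_triangle T a b hab x₁ h₁.symm h₂.symm).elim
    · rw [hyb] at h₁
      rw [hya, ← h1] at h₂
      exact (no_triangle T a b hab x₁ h₂.symm h₁.symm).elim
  · rcases (cf_eq_iff T a b hne).mp e2 with h2 | ⟨hya, hyb⟩ | ⟨hyb, hya⟩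
    · rw [hxa] at h₁
      rw [hxb, ← h2] at h₂
      exact (no_triangle T a b hab y₁ h₁ h₂).elim
    · rw [hxa, hya] at h₁
      exact absurd rfl h₁.ne
    · rw [hxa, hyb] at hs
      exact absurd rfl hs
  · rcases (cf_eq_iff T a b hne).mp e2 with h2 | ⟨hya, hyb⟩ | ⟨hyb, hya⟩
    · rw [hxb] at h₁
      rw [hxa, ← h2] at h₂
      exact (no_triangle T a b hab y₁ h₂ h₁).elim
    · rw [hxb, hya] at hs
      exact absurd Sym2.eq_swap hs
    · rw [hxb, hyb] at h₁
      exact absurd rfl h₁.ne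

lemma map_edge_inj (hab : T.G.Adj a b) {e₁ e₂ : Sym2 T.V}
    (h₁ : e₁ ∈ T.G.edgeSet) (h₂ : e₂ ∈ T.G.edgeSet) (hs : e₁ ≠ s(a, b))
    (he : Sym2.map (cf T a b hne) e₁ = Sym2.map (cf T a b hne) e₂) : e₁ = e₂ := by
  induction e₁ using Sym2.ind with | _ x₁ y₁ =>
  induction e₂ using Sym2.ind with | _ x₂ y₂ =>
  rw [Sym2.map_pair_eq, Sym2.map_pair_eq, Sym2.eq_iff] at he
  rw [SimpleGraph.mem_edgeSet] at h₁ h₂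
  rcases he with ⟨e1, e2⟩ | ⟨e1, e2⟩
  · exact map_edge_inj_pair T a b hne hab h₁ h₂ hs e1 e2
  · exact (map_edge_inj_pair T a b hne hab h₁ h₂.symm hs e1 e2).trans Sym2.eq_swap

noncomputable def lamc (lam : Sym2 T.V → Option M) :
    Sym2 {v : T.V // v ≠ b} → Option M := fun e' =>
  if h : ∃ e, e ∈ T.G.edgeSet ∧ Sym2.map (cf T a b hne) e = e' then lam h.choose else none

lemma lamc_map (hab : T.G.Adj a b) (lam : Sym2 T.V → Option M) {e : Sym2 T.V}
    (heS : e ∈ T.G.edgeSet) (hsne : e ≠ s(a, b)) :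
    lamc T a b hne lam (Sym2.map (cf T a b hne) e) = lam e := by
  have hex : ∃ e₀, e₀ ∈ T.G.edgeSet ∧
      Sym2.map (cf T a b hne) e₀ = Sym2.map (cf T a b hne) e := ⟨e, heS, rfl⟩
  simp only [lamc]
  rw [dif_pos hex]
  exact congrArg lam (map_edge_inj T a b hne hab heS hex.choose_spec.1 hsne
    hex.choose_spec.2.symm).symm

lemma CG_adj {u w : T.V} (heq : cf T a b hne u ≠ cf T a b hne w) (h : T.G.Adj u w) :
    (CG T a b hne).Adj (cf T a b hne u) (cf T a b hne w) := ⟨heq, u, w, h, rfl, rfl⟩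

noncomputable def mapWalk : ∀ {u v : T.V}, T.G.Walk u v →
    (CG T a b hne).Walk (cf T a b hne u) (cf T a b hne v)
  | _, _, Walk.nil => Walk.nil
  | u, _, Walk.cons (v := w) h q =>
    if heq : cf T a b hne u = cf T a b hne w then (mapWalk q).copy heq.symm rfl
    else Walk.cons (CG_adj T a b hne heq h) (mapWalk q)

lemma mapWalk_nil {u : T.V} : mapWalk T a b hne (Walk.nil : T.G.Walk u u) = Walk.nil := by
  rw [mapWalk]

lemma mapWalk_cons {u w v : T.V} (h : T.G.Adj u w) (q : T.G.Walk w v) :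
    mapWalk T a b hne (Walk.cons h q) =
      if heq : cf T a b hne u = cf T a b hne w then (mapWalk T a b hne q).copy heq.symm rfl
      else Walk.cons (CG_adj T a b hne heq h) (mapWalk T a b hne q) := by
  rw [mapWalk]

lemma mem_mapWalk_support {u v : T.V} (q : T.G.Walk u v) (z : {v : T.V // v ≠ b}) :
    z ∈ (mapWalk T a b hne q).support ↔ ∃ y ∈ q.support, cf T a b hne y = z := by
  induction q with
  | nil => simp [mapWalk_nil, eq_comm]
  | @cons u w v h q ih =>
    rw [mapWalk_cons]
    split_ifs with heq
    · rw [Walk.support_copy]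
      rw [ih]
      constructor
      · rintro ⟨y, hy, rfl⟩
        exact ⟨y, by rw [Walk.support_cons]; exact List.mem_cons_of_mem _ hy, rfl⟩
      · rintro ⟨y, hy, rfl⟩
        rw [Walk.support_cons, List.mem_cons] at hy
        rcases hy with rfl | hy
        · exact ⟨w, q.start_mem_support, heq.symm⟩
        · exact ⟨y, hy, rfl⟩
    · rw [Walk.support_cons, List.mem_cons, ih]
      constructor
      · rintro (rfl | ⟨y, hy, rfl⟩)
        · exact ⟨u, (Walk.cons h q).start_mem_support, rfl⟩
        · exact ⟨y, by rw [Walk.support_cons]; exact List.mem_cons_of_mem _ hy, rfl⟩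
      · rintro ⟨y, hy, rfl⟩
        rw [Walk.support_cons, List.mem_cons] at hy
        rcases hy with rfl | hy
        · exact Or.inl rfl
        · exact Or.inr ⟨y, hy, rfl⟩

lemma mem_mapWalk_edges {u v : T.V} (q : T.G.Walk u v) (e' : Sym2 {v : T.V // v ≠ b}) :
    e' ∈ (mapWalk T a b hne q).edges ↔
      ∃ e ∈ q.edges, e ≠ s(a, b) ∧ Sym2.map (cf T a b hne) e = e' := by
  induction q with
  | nil => simp [mapWalk_nil]
  | @cons u w v h q ih =>
    rw [mapWalk_cons]
    split_ifs with heq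
    · rw [Walk.edges_copy, ih]
      have hsab : s(u, w) = s(a, b) := adj_cf_eq T a b hne h heq
      constructor
      · rintro ⟨e, he, hne2, rfl⟩
        exact ⟨e, by rw [Walk.edges_cons]; exact List.mem_cons_of_mem _ he, hne2, rfl⟩
      · rintro ⟨e, he, hne2, rfl⟩
        rw [Walk.edges_cons, List.mem_cons] at he
        rcases he with rfl | he
        · exact absurd hsab hne2
        · exact ⟨e, he, hne2, rfl⟩
    · rw [Walk.edges_cons, List.mem_cons, ih]
      have hsab : s(u, w) ≠ s(a, b) := fun hs => heq (edge_eq_cf_eq T a b hne hs)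
      constructor
      · rintro (rfl | ⟨e, he, hne2, rfl⟩)
        · exact ⟨s(u, w), by rw [Walk.edges_cons]; exact List.mem_cons_self, hsab,
            Sym2.map_pair_eq _ _ _⟩
        · exact ⟨e, by rw [Walk.edges_cons]; exact List.mem_cons_of_mem _ he, hne2, rfl⟩
      · rintro ⟨e, he, hne2, rfl⟩
        rw [Walk.edges_cons, List.mem_cons] at he
        rcases he with rfl | he
        · exact Or.inl (Sym2.map_pair_eq _ _ _).symm
        · exact Or.inr ⟨e, he, hne2, rfl⟩

lemma mapWalk_isPath (hab : T.G.Adj a b) {u v : T.V} {q : T.G.Walk u v} (hq : q.IsPath) :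
    (mapWalk T a b hne q).IsPath := by
  induction q with
  | nil => rw [mapWalk_nil]; exact Walk.IsPath.nil
  | @cons u w v h q ih =>
    rw [mapWalk_cons]
    split_ifs with heq
    · rw [Walk.isPath_copy]
      exact ih hq.of_cons
    · rw [Walk.cons_isPath_iff]
      refine ⟨ih hq.of_cons, ?_⟩
      intro hmem
      obtain ⟨y, hy, hcy⟩ := (mem_mapWalk_support T a b hne q _).mp hmem
      have hyu : y ≠ u := fun h' => ((Walk.cons_isPath_iff h q).mp hq).2 (h' ▸ hy)
      rcases (cf_eq_iff T a b hne).mp hcy with h' | ⟨hya, hub⟩ | ⟨hyb, hua⟩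
      · exact hyu h'
      · -- y = a, u = b
        have hbmem : b ∈ (Walk.cons h q).support := by
          rw [← hub]; exact Walk.start_mem_support _
        have hamem : a ∈ (Walk.cons h q).support := by
          rw [← hya, Walk.support_cons]; exact List.mem_cons_of_mem _ hy
        have hedge := edge_mem_of_mem_support T.isTree hq hab hamem hbmem
        rw [Walk.edges_cons, List.mem_cons] at hedge
        rcases hedge with hedge | hedge
        · exact heq (edge_eq_cf_eq T a b hne hedge.symm)
        · have : u ∈ q.support := by
            rw [hub]
            exact Walk.snd_mem_support_of_mem_edges q hedge
          exact ((Walk.cons_isPath_iff h q).mp hq).2 this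
      · -- y = b, u = a
        have hamem : a ∈ (Walk.cons h q).support := by
          rw [← hua]; exact Walk.start_mem_support _
        have hbmem : b ∈ (Walk.cons h q).support := by
          rw [← hyb, Walk.support_cons]; exact List.mem_cons_of_mem _ hy
        have hedge := edge_mem_of_mem_support T.isTree hq hab hamem hbmem
        rw [Walk.edges_cons, List.mem_cons] at hedge
        rcases hedge with hedge | hedge
        · exact heq (edge_eq_cf_eq T a b hne hedge.symm)
        · have : u ∈ q.support := by
            rw [hua]
            exact Walk.fst_mem_support_of_mem_edges q hedge
          exact ((Walk.cons_isPath_iff h q).mp hq).2 this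

lemma copy_append_left {V' : Type} {G' : SimpleGraph V'} {u u' v w : V'}
    (p : G'.Walk u v) (r : G'.Walk v w) (h : u = u') :
    (p.copy h rfl).append r = (p.append r).copy h rfl := by
  subst h; rfl

lemma mapWalk_append {u v w : T.V} (q : T.G.Walk u v) (r : T.G.Walk v w) :
    mapWalk T a b hne (q.append r) =
      (mapWalk T a b hne q).append (mapWalk T a b hne r) := by
  induction q with
  | nil => rw [mapWalk_nil]; rfl
  | @cons u w' v h q ih =>
    rw [Walk.cons_append, mapWalk_cons, mapWalk_cons]
    split_ifs with heq
    · rw [ih, copy_append_left]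
    · rw [Walk.cons_append, ih]

lemma copy_nil_eq {V' : Type} {G' : SimpleGraph V'} {u u' : V'} (h : u = u') :
    ((Walk.nil : G'.Walk u u).copy h h) = Walk.nil := by
  subst h; rfl

lemma cons_copy_congr {V' : Type} {G' : SimpleGraph V'} {c u' d w' v v' : V'}
    (h : G'.Adj c d) (t : G'.Walk d v) (hc : c = u') (hd : d = w') (hv : v = v')
    (h2 : G'.Adj u' w') :
    (Walk.cons h t).copy hc hv = Walk.cons h2 (t.copy hd hv) := by
  subst hc; subst hd; subst hv; rfl

lemma append_nil_copy {V' : Type} {G' : SimpleGraph V'} {u v w : V'}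
    (p : G'.Walk u w) (h : v = w) :
    p.append ((Walk.nil : G'.Walk v v).copy h rfl) = p.copy rfl h.symm := by
  subst h
  rw [Walk.copy_rfl_rfl, Walk.copy_rfl_rfl, Walk.append_nil]

lemma exists_lift (hab : T.G.Adj a b) {u' v' : {v : T.V // v ≠ b}}
    (p' : (CG T a b hne).Walk u' v') (hp' : p'.IsPath) :
    ∃ (x y : T.V) (hx : cf T a b hne x = u') (hy : cf T a b hne y = v')
      (q : T.G.Walk x y), q.IsPath ∧ (mapWalk T a b hne q).copy hx hy = p' := by
  induction p' with
  | nil =>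
    rename_i w'
    refine ⟨w'.val, w'.val, cf_self T a b hne w', cf_self T a b hne w', Walk.nil,
      Walk.IsPath.nil, ?_⟩
    rw [mapWalk_nil, copy_nil_eq]
  | @cons u' w' v' hadj p'' ih =>
    obtain ⟨x₀, y, hx₀, hy, q₀, hq₀, heq⟩ := ih hp'.of_cons
    subst heq
    obtain ⟨hne', c, d, hcd, hc, hd⟩ := id hadj
    have hccd : cf T a b hne c ≠ cf T a b hne d := by
      rw [hc, hd]; exact hne'
    have hcnot : ∀ z ∈ q₀.support, cf T a b hne z ≠ u' := by
      intro z hz hcz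
      have : u' ∈ ((mapWalk T a b hne q₀).copy hx₀ hy).support := by
        rw [Walk.support_copy]
        exact (mem_mapWalk_support T a b hne q₀ u').mpr ⟨z, hz, hcz⟩
      exact ((Walk.cons_isPath_iff hadj _).mp hp').2 this
    by_cases hdx : d = x₀
    · subst hdx
      refine ⟨c, y, hc, hy, Walk.cons hcd q₀, ?_, ?_⟩
      · rw [Walk.cons_isPath_iff]
        exact ⟨hq₀, fun hcs => hcnot c hcs hc⟩
      · rw [mapWalk_cons, dif_neg hccd]
        exact cons_copy_congr _ _ hc hx₀ hy hadj
    · have hcfdx : cf T a b hne d = cf T a b hne x₀ := by rw [hd, hx₀]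
      have hDX : T.G.Adj x₀ d := by
        rcases (cf_eq_iff T a b hne).mp hcfdx with h' | ⟨h1, h2⟩ | ⟨h1, h2⟩
        · exact absurd h' hdx
        · rw [h1, h2]; exact hab.symm
        · rw [h1, h2]; exact hab
      by_cases hdmem : d ∈ q₀.support
      · have htake : q₀.takeUntil d hdmem = Walk.cons hDX Walk.nil := by
          refine path_eq T.isTree (hq₀.takeUntil hdmem) ?_
          rw [Walk.cons_isPath_iff]
          exact ⟨Walk.IsPath.nil, by simp [hDX.ne]⟩
        obtain ⟨q₁, hq₁def⟩ : ∃ q₁, q₁ = q₀.dropUntil d hdmem := ⟨_, rfl⟩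
        have hq₁ : q₁.IsPath := hq₁def ▸ hq₀.dropUntil hdmem
        have hq0eq : q₀ = Walk.cons hDX q₁ := by
          conv_lhs => rw [← q₀.take_spec hdmem]
          rw [htake, hq₁def, Walk.cons_append, Walk.nil_append]
        refine ⟨c, y, hc, hy, Walk.cons hcd q₁, ?_, ?_⟩
        · rw [Walk.cons_isPath_iff]
          refine ⟨hq₁, fun hcs => ?_⟩
          refine hcnot c ?_ hc
          rw [hq0eq, Walk.support_cons]
          exact List.mem_cons_of_mem _ hcs
        · rw [hq0eq, mapWalk_cons, mapWalk_cons, dif_neg hccd, dif_pos hcfdx.symm,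
            Walk.copy_copy]
          exact cons_copy_congr _ _ hc hd hy hadj
      · refine ⟨c, y, hc, hy, Walk.cons hcd (Walk.cons hDX.symm q₀), ?_, ?_⟩
        · rw [Walk.cons_isPath_iff, Walk.cons_isPath_iff]
          refine ⟨⟨hq₀, hdmem⟩, ?_⟩
          rw [Walk.support_cons, List.mem_cons]
          rintro (rfl | hcs)
          · exact hccd rfl
          · exact hcnot c hcs hc
        · rw [mapWalk_cons, dif_neg hccd, mapWalk_cons, dif_pos hcfdx,
            cons_copy_congr _ _ hc hd hy hadj, Walk.copy_copy]

lemma norm_start (hab : T.G.Adj a b) {x x₂ y : T.V} (q : T.G.Walk x y) (hq : q.IsPath)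
    (hfx : cf T a b hne x = cf T a b hne x₂) :
    ∃ q₂ : T.G.Walk x₂ y, q₂.IsPath ∧
      mapWalk T a b hne q₂ = (mapWalk T a b hne q).copy hfx rfl := by
  by_cases hxx : x = x₂
  · subst hxx
    exact ⟨q, hq, (Walk.copy_rfl_rfl _).symm⟩
  · have hADJ : T.G.Adj x₂ x := by
      rcases (cf_eq_iff T a b hne).mp hfx with h' | ⟨h1, h2⟩ | ⟨h1, h2⟩
      · exact absurd h' hxx
      · rw [h1, h2]; exact hab.symm
      · rw [h1, h2]; exact hab
    by_cases hmem : x₂ ∈ q.support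
    · have htake : q.takeUntil x₂ hmem = Walk.cons hADJ.symm Walk.nil := by
        refine path_eq T.isTree (hq.takeUntil hmem) ?_
        rw [Walk.cons_isPath_iff]
        exact ⟨Walk.IsPath.nil, by simp [hADJ.ne']⟩
      obtain ⟨q₁, hq₁def⟩ : ∃ q₁, q₁ = q.dropUntil x₂ hmem := ⟨_, rfl⟩
      have hq₁ : q₁.IsPath := hq₁def ▸ hq.dropUntil hmem
      have hqeq : q = Walk.cons hADJ.symm q₁ := by
        conv_lhs => rw [← q.take_spec hmem]
        rw [htake, hq₁def, Walk.cons_append, Walk.nil_append]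
      refine ⟨q₁, hq₁, ?_⟩
      rw [hqeq, mapWalk_cons, dif_pos hfx, Walk.copy_copy]
      exact (Walk.copy_rfl_rfl _).symm
    · refine ⟨Walk.cons hADJ q, ?_, ?_⟩
      · rw [Walk.cons_isPath_iff]
        exact ⟨hq, hmem⟩
      · rw [mapWalk_cons, dif_pos hfx.symm]

lemma norm_end (hab : T.G.Adj a b) {x y y₂ : T.V} (q : T.G.Walk x y) (hq : q.IsPath)
    (hfy : cf T a b hne y = cf T a b hne y₂) :
    ∃ q₂ : T.G.Walk x y₂, q₂.IsPath ∧
      mapWalk T a b hne q₂ = (mapWalk T a b hne q).copy rfl hfy := by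
  by_cases hyy : y = y₂
  · subst hyy
    exact ⟨q, hq, (Walk.copy_rfl_rfl _).symm⟩
  · have hADJ : T.G.Adj y y₂ := by
      rcases (cf_eq_iff T a b hne).mp hfy with h' | ⟨h1, h2⟩ | ⟨h1, h2⟩
      · exact absurd h' hyy
      · rw [h1, h2]; exact hab
      · rw [h1, h2]; exact hab.symm
    by_cases hmem : y₂ ∈ q.support
    · obtain ⟨q₂, hq₂def⟩ : ∃ q₂, q₂ = q.takeUntil y₂ hmem := ⟨_, rfl⟩
      have hq₂ : q₂.IsPath := hq₂def ▸ hq.takeUntil hmem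
      have hdrop : q.dropUntil y₂ hmem = Walk.cons hADJ.symm Walk.nil := by
        refine path_eq T.isTree (hq.dropUntil hmem) ?_
        rw [Walk.cons_isPath_iff]
        exact ⟨Walk.IsPath.nil, by simp [hADJ.ne']⟩
      have hqeq : q = q₂.append (Walk.cons hADJ.symm Walk.nil) := by
        conv_lhs => rw [← q.take_spec hmem]
        rw [hdrop, hq₂def]
      refine ⟨q₂, hq₂, ?_⟩
      rw [hqeq, mapWalk_append, mapWalk_cons, dif_pos hfy.symm, mapWalk_nil,
        append_nil_copy, Walk.copy_copy]
      exact (Walk.copy_rfl_rfl _).symm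
    · refine ⟨q.append (Walk.cons hADJ Walk.nil), ?_, ?_⟩
      · refine append_isPath hq ?_ ?_
        · rw [Walk.cons_isPath_iff]
          exact ⟨Walk.IsPath.nil, by simp [hADJ.ne]⟩
        · intro z hz hz2
          rw [Walk.support_cons, Walk.support_nil, List.mem_cons, List.mem_singleton] at hz2
          rcases hz2 with rfl | rfl
          · rfl
          · exact absurd hz hmem
      · rw [mapWalk_append, mapWalk_cons, dif_pos hfy, mapWalk_nil, append_nil_copy]

lemma pathc_unique (hab : T.G.Adj a b) {u' v' : {v : T.V // v ≠ b}}
    (p' q' : (CG T a b hne).Walk u' v') (hp' : p'.IsPath) (hq' : q'.IsPath) :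
    p' = q' := by
  obtain ⟨x₁, y₁, hx₁, hy₁, r₁, hr₁, he₁⟩ := exists_lift T a b hne hab p' hp'
  obtain ⟨x₂, y₂, hx₂, hy₂, r₂, hr₂, he₂⟩ := exists_lift T a b hne hab q' hq'
  obtain ⟨r₃, hr₃, hm₃⟩ := norm_start T a b hne hab r₂ hr₂ (hx₂.trans hx₁.symm)
  obtain ⟨r₄, hr₄, hm₄⟩ := norm_end T a b hne hab r₃ hr₃ (hy₂.trans hy₁.symm)
  have h14 : r₁ = r₄ := path_eq T.isTree hr₁ hr₄
  rw [← he₁, ← he₂, h14, hm₄, hm₃, Walk.copy_copy, Walk.copy_copy]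

lemma injOn_cf_neigh (hab : T.G.Adj a b) (v : T.V) :
    Set.InjOn (cf T a b hne) (T.G.neighborSet v) := by
  intro y₁ hy₁ y₂ hy₂ hcf
  rcases (cf_eq_iff T a b hne).mp hcf with h | ⟨h1, h2⟩ | ⟨h1, h2⟩
  · exact h
  · rw [h1] at hy₁
    rw [h2] at hy₂
    exact (no_triangle T a b hab v hy₁.symm hy₂.symm).elim
  · rw [h1] at hy₁
    rw [h2] at hy₂
    exact (no_triangle T a b hab v hy₂.symm hy₁.symm).elim

lemma neigh_ne_a (hab : T.G.Adj a b) {v' : {v : T.V // v ≠ b}} (hva : v'.val ≠ a) :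
    (CG T a b hne).neighborSet v' = cf T a b hne '' (T.G.neighborSet v'.val) := by
  ext w'
  constructor
  · rintro ⟨hne', x, y, hxy, hx, hy⟩
    rcases cf_fiber T a b hne hx with h1 | ⟨h1, h2⟩
    · rw [h1] at hxy
      exact ⟨y, hxy, hy⟩
    · exact absurd h1 hva
  · rintro ⟨y, hyN, rfl⟩
    refine ⟨?_, v'.val, y, hyN, cf_self T a b hne v', rfl⟩
    intro heq
    rcases cf_fiber T a b hne heq.symm with h1 | ⟨h1, h2⟩
    · rw [← h1] at hyN
      exact T.G.irrefl hyN
    · exact hva h1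

lemma deg_c_ne_a (hab : T.G.Adj a b) {v' : {v : T.V // v ≠ b}} (hva : v'.val ≠ a) :
    ((CG T a b hne).neighborSet v').ncard = T.deg v'.val := by
  rw [neigh_ne_a T a b hne hab hva,
    Set.ncard_image_of_injOn (injOn_cf_neigh T a b hne hab v'.val)]
  rfl

lemma neigh_a (hab : T.G.Adj a b) :
    (CG T a b hne).neighborSet ⟨a, hne⟩ =
      cf T a b hne '' ((T.G.neighborSet a ∪ T.G.neighborSet b) \ {a, b}) := by
  ext w'
  constructor
  · rintro ⟨hne', x, y, hxy, hx, hy⟩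
    have hxab : x = a ∨ x = b := by
      rcases cf_fiber T a b hne hx with h1 | ⟨h1, h2⟩
      · exact Or.inl h1
      · exact Or.inr h2
    have hyab : y ∉ ({a, b} : Set T.V) := by
      intro hy2
      apply hne'
      rcases hy2 with rfl | hy2
      · rw [← hy, cf_a]
      · rw [Set.mem_singleton_iff] at hy2
        rw [← hy, hy2, cf_b]
    refine ⟨y, ⟨?_, hyab⟩, hy⟩
    rcases hxab with rfl | rfl
    · exact Or.inl hxy
    · exact Or.inr hxy
  · rintro ⟨y, ⟨hyN, hyab⟩, rfl⟩
    have hya : y ≠ a := fun h => hyab (by rw [h]; exact Set.mem_insert _ _)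
    have hyb : y ≠ b := fun h => hyab (by rw [h]; exact Set.mem_insert_of_mem _ rfl)
    have hne2 : (⟨a, hne⟩ : {v : T.V // v ≠ b}) ≠ cf T a b hne y := by
      rw [cf_of_ne T a b hne hyb]
      intro h
      exact hya (congrArg Subtype.val h).symm
    rcases hyN with hyN | hyN
    · exact ⟨hne2, a, y, hyN, cf_a T a b hne, rfl⟩
    · exact ⟨hne2, b, y, hyN, cf_b T a b hne, rfl⟩

lemma deg_c_a (hab : T.G.Adj a b) :
    ((CG T a b hne).neighborSet ⟨a, hne⟩).ncard = (T.deg a - 1) + (T.deg b - 1) := by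
  letI := T.fintypeV
  rw [neigh_a T a b hne hab]
  have hinj : Set.InjOn (cf T a b hne) ((T.G.neighborSet a ∪ T.G.neighborSet b) \ {a, b}) := by
    intro y₁ hy₁ y₂ hy₂ hcf
    rcases (cf_eq_iff T a b hne).mp hcf with h | ⟨h1, h2⟩ | ⟨h1, h2⟩
    · exact h
    · exact absurd (by rw [h1]; exact Set.mem_insert _ _) hy₁.2
    · exact absurd (by rw [h2]; exact Set.mem_insert _ _) hy₂.2
  rw [Set.ncard_image_of_injOn hinj]
  have hsplit : (T.G.neighborSet a ∪ T.G.neighborSet b) \ {a, b} =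
      (T.G.neighborSet a \ {b}) ∪ (T.G.neighborSet b \ {a}) := by
    ext z
    constructor
    · rintro ⟨hz, hzab⟩
      have hza : z ≠ a := fun h => hzab (by rw [h]; exact Set.mem_insert _ _)
      have hzb : z ≠ b := fun h => hzab (by rw [h]; exact Set.mem_insert_of_mem _ rfl)
      rcases hz with hz | hz
      · exact Or.inl ⟨hz, hzb⟩
      · exact Or.inr ⟨hz, hza⟩
    · rintro (⟨hz, hzb⟩ | ⟨hz, hza⟩)
      · refine ⟨Or.inl hz, ?_⟩
        intro hmem
        rcases hmem with rfl | hmem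
        · exact T.G.irrefl hz
        · rw [Set.mem_singleton_iff] at hmem
          exact hzb hmem
      · refine ⟨Or.inr hz, ?_⟩
        intro hmem
        rcases hmem with rfl | hmem
        · exact hza rfl
        · rw [Set.mem_singleton_iff] at hmem
          rw [hmem] at hz
          exact T.G.irrefl hz
  have hdisj : Disjoint (T.G.neighborSet a \ {b}) (T.G.neighborSet b \ {a}) := by
    rw [Set.disjoint_left]
    rintro z ⟨hz1, -⟩ ⟨hz2, -⟩
    exact no_triangle T a b hab z hz1 hz2
  rw [hsplit, Set.ncard_union_eq hdisj (Set.toFinite _) (Set.toFinite _),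
    Set.ncard_diff_singleton_of_mem ((T.G.mem_neighborSet a b).mpr hab),
    Set.ncard_diff_singleton_of_mem ((T.G.mem_neighborSet b a).mpr hab.symm)]
  rfl

lemma three_le_deg_merged (hab : T.G.Adj a b) (ha : ¬T.IsLeaf a) (hb : ¬T.IsLeaf b)
    (hphy : T.Phylo) :
    3 ≤ ((CG T a b hne).neighborSet ⟨a, hne⟩).ncard := by
  rw [deg_c_a T a b hne hab]
  have h2a := two_le_deg T ha
  have h2b := two_le_deg T hb
  have h3 : 3 ≤ T.deg a ∨ 3 ≤ T.deg b := by
    by_cases hra : a = T.root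
    · right
      refine hphy.2.2 b hb ?_
      intro hrb
      exact hne (hra.trans hrb.symm)
    · left
      exact hphy.2.2 a ha hra
  omega

@[reducible] noncomputable def Tc (hab : T.G.Adj a b) (ha : ¬T.IsLeaf a) (hb : ¬T.IsLeaf b)
    (hphy : T.Phylo) : RootedTree X where
  V := {v : T.V // v ≠ b}
  fintypeV := letI := T.fintypeV; Fintype.ofInjective Subtype.val Subtype.val_injective
  G := CG T a b hab.ne
  isTree := by
    rw [SimpleGraph.isTree_iff_existsUnique_path]
    refine ⟨⟨⟨a, hab.ne⟩⟩, fun u' v' => ?_⟩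
    refine ⟨(mapWalk T a b hab.ne (tpath T.isTree u'.val v'.val)).copy
      (cf_self T a b hab.ne u') (cf_self T a b hab.ne v'), ?_, ?_⟩
    · simp only [Walk.isPath_copy]
      exact mapWalk_isPath T a b hab.ne hab (tpath_isPath _ _ _)
    · intro r hr
      refine pathc_unique T a b hab.ne hab r _ hr ?_
      simp only [Walk.isPath_copy]
      exact mapWalk_isPath T a b hab.ne hab (tpath_isPath _ _ _)
  root := cf T a b hab.ne T.root
  leaf x := ⟨T.leaf x, fun h => hb ⟨x, h⟩⟩
  leaf_inj := fun x y h => T.leaf_inj (congrArg Subtype.val h)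
  leaf_iff := by
    intro v'
    constructor
    · rintro ⟨x, rfl⟩
      have hxa : (⟨T.leaf x, fun h => hb ⟨x, h⟩⟩ : {v : T.V // v ≠ b}).val ≠ a :=
        fun h => ha ⟨x, h⟩
      rw [deg_c_ne_a T a b hab.ne hab hxa]
      exact (T.leaf_iff _).mp ⟨x, rfl⟩
    · intro hdeg
      by_cases hva : v'.val = a
      · exfalso
        have h3 := three_le_deg_merged T a b hab.ne hab ha hb hphy
        have hv : v' = ⟨a, hab.ne⟩ := Subtype.ext hva
        rw [hv] at hdeg
        omega
      · rw [deg_c_ne_a T a b hab.ne hab hva] at hdeg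
        obtain ⟨x, hx⟩ := (T.leaf_iff _).mpr hdeg
        exact ⟨x, Subtype.ext hx⟩

lemma cf_root_val (hab : T.G.Adj a b) (hva : (cf T a b hab.ne T.root).val ≠ a) :
    (cf T a b hab.ne T.root).val = T.root := by
  by_cases hrb : T.root = b
  · exfalso
    apply hva
    rw [hrb, cf_b]
  · rw [cf_of_ne T a b hab.ne hrb]

lemma two_le_deg_c_root (hab : T.G.Adj a b) (ha : ¬T.IsLeaf a) (hb : ¬T.IsLeaf b)
    (hphy : T.Phylo) :
    2 ≤ ((CG T a b hab.ne).neighborSet (cf T a b hab.ne T.root)).ncard := by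
  by_cases hva : (cf T a b hab.ne T.root).val = a
  · have hv : cf T a b hab.ne T.root = ⟨a, hab.ne⟩ := Subtype.ext hva
    rw [hv]
    have := three_le_deg_merged T a b hab.ne hab ha hb hphy
    omega
  · rw [deg_c_ne_a T a b hab.ne hab hva, cf_root_val T a b hab hva]
    exact hphy.2.1

lemma Tc_phylo (hab : T.G.Adj a b) (ha : ¬T.IsLeaf a) (hb : ¬T.IsLeaf b)
    (hphy : T.Phylo) : (Tc T a b hab ha hb hphy).Phylo := by
  have hroot2 := two_le_deg_c_root T a b hab ha hb hphy
  refine ⟨?_, hroot2, ?_⟩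
  · intro hleaf
    have := ((Tc T a b hab ha hb hphy).leaf_iff _).mp hleaf
    have h2 : (Tc T a b hab ha hb hphy).deg (Tc T a b hab ha hb hphy).root =
        ((CG T a b hab.ne).neighborSet (cf T a b hab.ne T.root)).ncard := rfl
    simp only [RootedTree.deg] at h2
    have h4 : ((Tc T a b hab ha hb hphy).G.neighborSet (Tc T a b hab ha hb hphy).root).ncard =
        ((CG T a b hab.ne).neighborSet (cf T a b hab.ne T.root)).ncard := rfl
    omega
  · intro v' hleaf hroot
    by_cases hva : v'.val = a
    · have hv : v' = ⟨a, hab.ne⟩ := Subtype.ext hva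
      show 3 ≤ ((CG T a b hab.ne).neighborSet v').ncard
      rw [hv]
      exact three_le_deg_merged T a b hab.ne hab ha hb hphy
    · show 3 ≤ ((CG T a b hab.ne).neighborSet v').ncard
      rw [deg_c_ne_a T a b hab.ne hab hva]
      have hnl : ¬T.IsLeaf v'.val := by
        rintro ⟨x, hx⟩
        exact hleaf ⟨x, Subtype.ext hx⟩
      have hnr : v'.val ≠ T.root := by
        intro h
        apply hroot
        have : v' = cf T a b hab.ne v'.val := (cf_self T a b hab.ne v').symm
        rw [this, h]
      exact hphy.2.2 v'.val hnl hnr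

lemma isContraction (hab : T.G.Adj a b) (ha : ¬T.IsLeaf a) (hb : ¬T.IsLeaf b)
    (hphy : T.Phylo) :
    IsContractionMap T (Tc T a b hab ha hb hphy) (cf T a b hab.ne) where
  surj := fun u => ⟨u.val, cf_self T a b hab.ne u⟩
  root_map := rfl
  leaf_map := fun x => cf_of_ne T a b hab.ne (fun h => hb ⟨x, h⟩)
  adj_map := by
    intro x y hxy
    by_cases h : cf T a b hab.ne x = cf T a b hab.ne y
    · exact Or.inl h
    · exact Or.inr ⟨h, x, y, hxy, rfl, rfl⟩
  adj_lift := by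
    rintro u v ⟨h1, x, y, hxy, hx, hy⟩
    exact ⟨x, y, hxy, hx, hy⟩
  fiber_conn := by
    intro u
    rw [SimpleGraph.connected_iff]
    refine ⟨?_, ⟨⟨u.val, cf_self T a b hab.ne u⟩⟩⟩
    intro z w
    rcases cf_fiber T a b hab.ne z.prop with hz | ⟨hz1, hz2⟩ <;>
      rcases cf_fiber T a b hab.ne w.prop with hw | ⟨hw1, hw2⟩
    · have : z = w := Subtype.ext (hz.trans hw.symm)
      rw [this]
    · have hadj : T.G.Adj z.val w.val := by
        rw [hz, hw1, hw2]
        exact hab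
      have hadj2 : (T.G.induce {c : T.V | cf T a b hab.ne c = u}).Adj z w := by
        simp only [SimpleGraph.comap_adj, Function.Embedding.coe_subtype]
        exact hadj
      exact hadj2.reachable
    · have hadj : T.G.Adj z.val w.val := by
        rw [hz2, hw, hz1]
        exact hab.symm
      have hadj2 : (T.G.induce {c : T.V | cf T a b hab.ne c = u}).Adj z w := by
        simp only [SimpleGraph.comap_adj, Function.Embedding.coe_subtype]
        exact hadj
      exact hadj2.reachable
    · have : z = w := Subtype.ext (hz2.trans hw2.symm)
      rw [this]

variable (hab : T.G.Adj a b) (ha : ¬T.IsLeaf a) (hb : ¬T.IsLeaf b) (hphy : T.Phylo)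

lemma Tc_anc_iff {u' : {v : T.V // v ≠ b}} {v : T.V} (p : T.G.Walk T.root v)
    (hp : p.IsPath) :
    (Tc T a b hab ha hb hphy).Anc u' (cf T a b hab.ne v) ↔
      ∃ z ∈ p.support, cf T a b hab.ne z = u' := by
  rw [anc_iff_mem (Tc T a b hab ha hb hphy) (mapWalk T a b hab.ne p)
    (mapWalk_isPath T a b hab.ne hab hp)]
  exact mem_mapWalk_support T a b hab.ne p u'

lemma anc_fwd {u v : T.V} (h : T.Anc u v) :
    (Tc T a b hab ha hb hphy).Anc (cf T a b hab.ne u) (cf T a b hab.ne v) := by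
  rw [Tc_anc_iff T a b hab ha hb hphy (tpath T.isTree T.root v) (tpath_isPath _ _ _)]
  exact ⟨u, (anc_iff_mem T _ (tpath_isPath _ _ _)).mp h, rfl⟩

lemma lca_fwd {l s t : T.V} (hl : T.IsLcaSet l {s, t}) :
    (Tc T a b hab ha hb hphy).IsLcaSet (cf T a b hab.ne l)
      {cf T a b hab.ne s, cf T a b hab.ne t} := by
  have hAs : T.Anc l s := hl.1 s (Set.mem_insert _ _)
  have hAt : T.Anc l t := hl.1 t (Set.mem_insert_of_mem _ rfl)
  have hps : (tpath T.isTree T.root s).IsPath := tpath_isPath _ _ _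
  have hpt : (tpath T.isTree T.root t).IsPath := tpath_isPath _ _ _
  constructor
  · rintro v' (rfl | hv)
    · exact anc_fwd T a b hab ha hb hphy hAs
    · rw [Set.mem_singleton_iff] at hv
      subst hv
      exact anc_fwd T a b hab ha hb hphy hAt
  · intro u' hu'
    have hus := hu' _ (Set.mem_insert _ _)
    have hut := hu' _ (Set.mem_insert_of_mem _ rfl)
    obtain ⟨zs, hzs, hczs⟩ :=
      (Tc_anc_iff T a b hab ha hb hphy (tpath T.isTree T.root s) hps).mp hus
    obtain ⟨zt, hzt, hczt⟩ :=
      (Tc_anc_iff T a b hab ha hb hphy (tpath T.isTree T.root t) hpt).mp hut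
    rw [Tc_anc_iff T a b hab ha hb hphy (tpath T.isTree T.root l) (tpath_isPath _ _ _)]
    by_cases hzz : zs = zt
    · subst hzz
      have hAzl : T.Anc zs l := by
        refine hl.2 zs ?_
        rintro v (rfl | hv)
        · exact (anc_iff_mem T _ hps).mpr hzs
        · rw [Set.mem_singleton_iff] at hv
          subst hv
          exact (anc_iff_mem T _ hpt).mpr hzt
      exact ⟨zs, (anc_iff_mem T _ (tpath_isPath _ _ _)).mp hAzl, hczs⟩
    · have hcc : cf T a b hab.ne zs = cf T a b hab.ne zt := hczs.trans hczt.symm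
      have hADJ : T.G.Adj zs zt := by
        rcases (cf_eq_iff T a b hab.ne).mp hcc with h | ⟨h1, h2⟩ | ⟨h1, h2⟩
        · exact absurd h hzz
        · rw [h1, h2]; exact hab
        · rw [h1, h2]; exact hab.symm
      suffices hsuff : zs ∈ (tpath T.isTree T.root l).support ∨
          zt ∈ (tpath T.isTree T.root l).support by
        rcases hsuff with h | h
        · exact ⟨zs, h, hczs⟩
        · exact ⟨zt, h, hczt⟩
      have hls : l ∈ (tpath T.isTree T.root s).support := (anc_iff_mem T _ hps).mp hAs
      have hlt : l ∈ (tpath T.isTree T.root t).support := (anc_iff_mem T _ hpt).mp hAt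
      have hPl_s : (tpath T.isTree T.root s).takeUntil l hls = tpath T.isTree T.root l :=
        path_eq T.isTree (hps.takeUntil hls) (tpath_isPath _ _ _)
      have hPl_t : (tpath T.isTree T.root t).takeUntil l hlt = tpath T.isTree T.root l :=
        path_eq T.isTree (hpt.takeUntil hlt) (tpath_isPath _ _ _)
      have hzs_split : zs ∈ ((tpath T.isTree T.root s).takeUntil l hls).support ∨
          zs ∈ ((tpath T.isTree T.root s).dropUntil l hls).support := by
        rw [← Walk.mem_support_append_iff, Walk.take_spec]
        exact hzs
      rcases hzs_split with hzs1 | hzs2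
      · left; rw [← hPl_s]; exact hzs1
      have hzt_split : zt ∈ ((tpath T.isTree T.root t).takeUntil l hlt).support ∨
          zt ∈ ((tpath T.isTree T.root t).dropUntil l hlt).support := by
        rw [← Walk.mem_support_append_iff, Walk.take_spec]
        exact hzt
      rcases hzt_split with hzt1 | hzt2
      · right; rw [← hPl_t]; exact hzt1
      by_cases hzsl : zs = l
      · left; rw [hzsl, ← hPl_s]; exact Walk.end_mem_support _
      by_cases hztl : zt = l
      · right; rw [hztl, ← hPl_t]; exact Walk.end_mem_support _
      exfalso
      have hds : ((tpath T.isTree T.root s).dropUntil l hls).IsPath := hps.dropUntil hls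
      have hdt : ((tpath T.isTree T.root t).dropUntil l hlt).IsPath := hpt.dropUntil hlt
      have hL1 : ∀ z, z ∈ ((tpath T.isTree T.root s).dropUntil l hls).support →
          z ∈ ((tpath T.isTree T.root t).dropUntil l hlt).support → z = l := by
        intro z h1 h2
        have hAzl : T.Anc z l := by
          refine hl.2 z ?_
          rintro v (rfl | hv)
          · exact (anc_iff_mem T _ hps).mpr (Walk.support_dropUntil_subset _ _ h1)
          · rw [Set.mem_singleton_iff] at hv
            subst hv
            exact (anc_iff_mem T _ hpt).mpr (Walk.support_dropUntil_subset _ _ h2)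
        have hz_take : z ∈ ((tpath T.isTree T.root s).takeUntil l hls).support := by
          rw [hPl_s]
          exact (anc_iff_mem T _ (tpath_isPath _ _ _)).mp hAzl
        exact mem_take_drop hps hls hz_take h1
      have hq₁ : (((tpath T.isTree T.root s).dropUntil l hls).takeUntil zs hzs2).IsPath :=
        hds.takeUntil hzs2
      have hq₂ : (((tpath T.isTree T.root t).dropUntil l hlt).takeUntil zt hzt2).IsPath :=
        hdt.takeUntil hzt2
      have hw : (((((tpath T.isTree T.root s).dropUntil l hls).takeUntil zs hzs2).reverse).append
          (((tpath T.isTree T.root t).dropUntil l hlt).takeUntil zt hzt2)).IsPath := by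
        refine append_isPath ?_ hq₂ ?_
        · rw [Walk.isPath_reverse_iff]
          exact hq₁
        · intro z hz1 hz2
          rw [Walk.support_reverse, List.mem_reverse] at hz1
          exact hL1 z (Walk.support_takeUntil_subset _ _ hz1)
            (Walk.support_takeUntil_subset _ _ hz2)
      have hcons : (Walk.cons hADJ Walk.nil : T.G.Walk zs zt).IsPath := by
        rw [Walk.cons_isPath_iff]
        exact ⟨Walk.IsPath.nil, by simp [hADJ.ne]⟩
      have hlen := congrArg Walk.length (path_eq T.isTree hw hcons)
      rw [Walk.length_append, Walk.length_reverse] at hlen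
      simp only [Walk.length_cons, Walk.length_nil] at hlen
      have h1 : (((tpath T.isTree T.root s).dropUntil l hls).takeUntil zs hzs2).length ≠ 0 :=
        fun h0 => hzsl (Walk.eq_of_length_eq_zero h0).symm
      have h2 : (((tpath T.isTree T.root t).dropUntil l hlt).takeUntil zt hzt2).length ≠ 0 :=
        fun h0 => hztl (Walk.eq_of_length_eq_zero h0).symm
      omega

lemma cf_leaf (x : X) :
    cf T a b hab.ne (T.leaf x) = (Tc T a b hab ha hb hphy).leaf x :=
  cf_of_ne T a b hab.ne (fun h => hb ⟨x, h⟩)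

lemma phl_iff (lam : Sym2 T.V → Option M) (hlam_ab : lam s(a, b) = none) (x y : X) (m : M) :
    PathHasLabel T lam x y m ↔
      PathHasLabel (Tc T a b hab ha hb hphy) (lamc T a b hab.ne lam) x y m := by
  constructor
  · rintro ⟨l, hlca, p, hp, e, he, hm⟩
    have hene : e ≠ s(a, b) := by
      intro h
      rw [h, hlam_ab] at hm
      exact nomatch hm
    refine ⟨cf T a b hab.ne l, ?_,
      (mapWalk T a b hab.ne p).copy rfl (cf_leaf T a b hab ha hb hphy y), ?_,
      Sym2.map (cf T a b hab.ne) e, ?_, ?_⟩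
    · have h1 := lca_fwd T a b hab ha hb hphy hlca
      rw [cf_leaf T a b hab ha hb hphy x, cf_leaf T a b hab ha hb hphy y] at h1
      exact h1
    · simp only [Walk.isPath_copy]
      exact mapWalk_isPath T a b hab.ne hab hp
    · rw [Walk.edges_copy]
      exact (mem_mapWalk_edges T a b hab.ne p _).mpr ⟨e, he, hene, rfl⟩
    · rw [lamc_map T a b hab.ne hab lam (Walk.edges_subset_edgeSet p he) hene]
      exact hm
  · rintro ⟨l', hlca', p', hp', e', he', hm'⟩
    obtain ⟨l, hlca⟩ := exists_lca T (T.leaf x) (T.leaf y)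
    have hfl : cf T a b hab.ne l = l' := by
      have h1 := lca_fwd T a b hab ha hb hphy hlca
      rw [cf_leaf T a b hab ha hb hphy x, cf_leaf T a b hab ha hb hphy y] at h1
      refine anc_antisymm (Tc T a b hab ha hb hphy) ?_ ?_
      · exact hlca'.2 _ h1.1
      · exact h1.2 _ hlca'.1
    have hq : (tpath T.isTree l (T.leaf y)).IsPath := tpath_isPath _ _ _
    have hmq : ((mapWalk T a b hab.ne (tpath T.isTree l (T.leaf y))).copy hfl
        (cf_leaf T a b hab ha hb hphy y)).IsPath := by
      simp only [Walk.isPath_copy]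
      exact mapWalk_isPath T a b hab.ne hab hq
    have hpe : p' = (mapWalk T a b hab.ne (tpath T.isTree l (T.leaf y))).copy hfl
        (cf_leaf T a b hab ha hb hphy y) :=
      pathc_unique T a b hab.ne hab p' _ hp' hmq
    rw [hpe, Walk.edges_copy] at he'
    obtain ⟨e, he, hene, hemap⟩ := (mem_mapWalk_edges T a b hab.ne _ _).mp he'
    refine ⟨l, hlca, tpath T.isTree l (T.leaf y), hq, e, he, ?_⟩
    have hlc := lamc_map T a b hab.ne hab lam (Walk.edges_subset_edgeSet _ he) hene
    rw [hemap] at hlc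
    exact hlc.symm.trans hm'

lemma Tc_explains (lam : Sym2 T.V → Option M) (eps : X → X → Option M)
    (hex : Explains T lam eps) (hlam_ab : lam s(a, b) = none) :
    Explains (Tc T a b hab ha hb hphy) (lamc T a b hab.ne lam) eps := by
  intro x y hxy
  obtain ⟨h1, h2⟩ := hex x y hxy
  refine ⟨fun m => (h1 m).trans (phl_iff T a b hab ha hb hphy lam hlam_ab x y m), ?_⟩
  rw [h2]
  exact forall_congr' fun m => not_congr (phl_iff T a b hab ha hb hphy lam hlam_ab x y m)

end Contract

theorem stmt10 {X M : Type} [Fintype X] [Fintype M] [Nonempty M]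
    (hX : 1 < Fintype.card X)
    (eps : X → X → Option M)
    (htl : TreeLike eps)
    (T : RootedTree X) (lam : Sym2 T.V → Option M)
    (hlr : LeastResolved eps T lam) :
    ∀ a b : T.V, T.G.Adj a b → ¬ T.IsLeaf a → ¬ T.IsLeaf b →
      lam s(a, b) ≠ none := by
  intro a b hadj hla hlb hnone
  obtain ⟨hphy, hexp, hmin⟩ := hlr
  exact hmin (Tc T a b hadj hla hlb hphy) (cf T a b hadj.ne) (lamc T a b hadj.ne lam)
    (isContraction T a b hadj hla hlb hphy)
    (fun hinj => hadj.ne (hinj (by rw [cf_a, cf_b])))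
    (Tc_phylo T a b hadj hla hlb hphy)
    (Tc_explains T a b hadj hla hlb hphy lam eps hexp hnone)


end GenFitch
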